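/- arXiv:2307.01974 — 2 statements merged into one kernel-verified Lean document; each statement's English description precedes it below -/
import Mathlib

section
/- Let ρ ∈ (−1,1) and u ∈ ℝ. Then ∫_u^∞ ∫_{−∞}^0 w · P_ρ(z,w) dw dz = −(1/√(2π)) · [ Ψ(u/√(1−ρ²)) − √(2π) · ρ · φ(u) · Φ(−ρu/√(1−ρ²)) ], where the inner integral is over w ∈ (−∞,0) and the outer over z ∈ (u,∞). -/
open MeasureTheory Real
open Filter Set

/-- The standard normal pdf. -/
noncomputable def stdPdf (x : ℝ) : ℝ := (Real.sqrt (2 * Real.pi))⁻¹ * Real.exp (-x ^ 2 / 2)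

/-- The standard normal cdf. -/
noncomputable def stdCdf (x : ℝ) : ℝ := ∫ s in Set.Iio x, stdPdf s

/-- The standard normal tail probability. -/
noncomputable def stdTail (x : ℝ) : ℝ := 1 - stdCdf x

/-- The joint density of a standard bivariate normal vector with correlation ρ. -/
noncomputable def binormPdf (ρ x y : ℝ) : ℝ :=
  (2 * Real.pi * Real.sqrt (1 - ρ ^ 2))⁻¹ *
    Real.exp (-(x ^ 2 - 2 * ρ * x * y + y ^ 2) / (2 * (1 - ρ ^ 2)))

lemma continuous_stdPdf : Continuous stdPdf := by
  unfold stdPdf; continuity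

lemma stdPdf_nonneg (x : ℝ) : 0 ≤ stdPdf x := by
  unfold stdPdf; positivity

lemma integrable_stdPdf : Integrable stdPdf := by
  have h : Integrable (fun x : ℝ => Real.exp (-(1/2 : ℝ) * x ^ 2)) := integrable_exp_neg_mul_sq (by norm_num)
  have := h.const_mul (Real.sqrt (2 * Real.pi))⁻¹
  refine this.congr (Filter.Eventually.of_forall fun x => ?_)
  unfold stdPdf; ring_nf

lemma integral_stdPdf : ∫ x, stdPdf x = 1 := by
  have h : ∫ x : ℝ, Real.exp (-(1/2 : ℝ) * x ^ 2) = Real.sqrt (Real.pi / (1/2)) := integral_gaussian (1/2)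
  have h2 : ∫ x, stdPdf x = (Real.sqrt (2 * Real.pi))⁻¹ * ∫ x : ℝ, Real.exp (-(1/2 : ℝ) * x ^ 2) := by
    rw [← integral_const_mul]
    congr 1; ext x; unfold stdPdf; ring_nf
  rw [h2, h]
  rw [show Real.pi / (1/2) = 2 * Real.pi by ring]
  rw [inv_mul_cancel₀]
  positivity

lemma stdCdf_eq_Iic (x : ℝ) : stdCdf x = ∫ s in Set.Iic x, stdPdf s :=
  (MeasureTheory.integral_Iic_eq_integral_Iio).symm

lemma hasDerivAt_stdCdf (x : ℝ) : HasDerivAt stdCdf (stdPdf x) x := by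
  have key : ∀ y : ℝ, stdCdf y = stdCdf 0 + ∫ t in (0:ℝ)..y, stdPdf t := by
    intro y
    have h := intervalIntegral.integral_Iic_sub_Iic (integrable_stdPdf.integrableOn (s := Set.Iic (0:ℝ)))
      (integrable_stdPdf.integrableOn (s := Set.Iic y))
    rw [stdCdf_eq_Iic, stdCdf_eq_Iic]
    linarith [h]
  have hd : HasDerivAt (fun y => stdCdf 0 + ∫ t in (0:ℝ)..y, stdPdf t) (stdPdf x) x := by
    apply HasDerivAt.const_add
    exact intervalIntegral.integral_hasDerivAt_right
      (continuous_stdPdf.intervalIntegrable _ _)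
      (continuous_stdPdf.stronglyMeasurableAtFilter _ _)
      continuous_stdPdf.continuousAt
  exact hd.congr_of_eventuallyEq (Filter.Eventually.of_forall key)

lemma continuous_stdCdf : Continuous stdCdf :=
  continuous_iff_continuousAt.2 fun x => (hasDerivAt_stdCdf x).continuousAt

lemma stdCdf_nonneg (x : ℝ) : 0 ≤ stdCdf x :=
  MeasureTheory.setIntegral_nonneg measurableSet_Iio fun s _ => stdPdf_nonneg s

lemma stdCdf_le_one (x : ℝ) : stdCdf x ≤ 1 := by
  rw [← integral_stdPdf]
  exact MeasureTheory.setIntegral_le_integral integrable_stdPdf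
    (Filter.Eventually.of_forall stdPdf_nonneg)

lemma tendsto_stdCdf_atTop : Tendsto stdCdf atTop (nhds 1) := by
  have h := (MeasureTheory.aecover_Iic (tendsto_id (α := ℝ) (x := atTop))
    (μ := volume)).integral_tendsto_of_countably_generated integrable_stdPdf
  rw [integral_stdPdf] at h
  refine h.congr fun x => ?_
  exact (stdCdf_eq_Iic x).symm

lemma tendsto_stdCdf_atBot : Tendsto stdCdf atBot (nhds 0) := by
  have h := (MeasureTheory.aecover_Ici (tendsto_id (α := ℝ) (x := atBot))
    (μ := volume)).integral_tendsto_of_countably_generated integrable_stdPdf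
  rw [integral_stdPdf] at h
  have key : ∀ x : ℝ, stdCdf x = 1 - ∫ s in Set.Ici x, stdPdf s := by
    intro x
    have := MeasureTheory.integral_add_compl (s := Set.Iio x) measurableSet_Iio integrable_stdPdf (f := stdPdf)
    rw [compl_Iio, integral_stdPdf] at this
    unfold stdCdf; linarith
  have : Tendsto (fun x : ℝ => 1 - ∫ s in Set.Ici x, stdPdf s) atBot (nhds (1 - 1)) :=
    (tendsto_const_nhds).sub h
  simpa [key] using this.congr fun x => (key x).symm

section
variable {ρ : ℝ} (hρ : ρ ∈ Set.Ioo (-1 : ℝ) 1)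
include hρ

lemma one_sub_sq_pos : 0 < 1 - ρ ^ 2 := by
  obtain ⟨h1, h2⟩ := hρ; nlinarith

lemma sigma_pos : 0 < Real.sqrt (1 - ρ ^ 2) := Real.sqrt_pos.2 (one_sub_sq_pos hρ)

lemma sigma_sq : (Real.sqrt (1 - ρ ^ 2)) ^ 2 = 1 - ρ ^ 2 :=
  Real.sq_sqrt (one_sub_sq_pos hρ).le

lemma binormPdf_eq (z w : ℝ) :
    binormPdf ρ z w = (2 * Real.pi * Real.sqrt (1 - ρ ^ 2))⁻¹ * Real.exp (-z ^ 2 / 2) *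
      Real.exp (-(w - ρ * z) ^ 2 / (2 * (Real.sqrt (1 - ρ ^ 2)) ^ 2)) := by
  set σ := Real.sqrt (1 - ρ ^ 2) with hσdef
  have hσ2 := sigma_sq hρ
  have hσ0 : σ ≠ 0 := (sigma_pos hρ).ne'
  unfold binormPdf
  rw [mul_assoc _ (Real.exp _) (Real.exp _), ← Real.exp_add]
  congr 1
  congr 1
  rw [← hσ2, ← hσdef]
  have h2 : (0:ℝ) < σ ^ 2 := by positivity
  field_simp
  linear_combination z ^ 2 * (sigma_sq hρ : σ ^ 2 = 1 - ρ ^ 2)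
end

lemma integrable_mul_gauss {b : ℝ} (hb : 0 < b) (c : ℝ) :
    Integrable (fun w : ℝ => w * Real.exp (-b * (w - c) ^ 2)) := by
  have h1 : Integrable (fun t : ℝ => t * Real.exp (-b * t ^ 2) + c * Real.exp (-b * t ^ 2)) :=
    (integrable_mul_exp_neg_mul_sq hb).add ((integrable_exp_neg_mul_sq hb).const_mul c)
  have h2 := h1.comp_sub_right c
  refine h2.congr (Filter.Eventually.of_forall fun w => ?_)
  show (w - c) * Real.exp (-b * (w - c) ^ 2) + c * Real.exp (-b * (w - c) ^ 2)
      = w * Real.exp (-b * (w - c) ^ 2)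
  ring

section
variable {ρ : ℝ} (hρ : ρ ∈ Set.Ioo (-1 : ℝ) 1)
include hρ

lemma inner_integrable (z : ℝ) :
    Integrable (fun w => w * binormPdf ρ z w) := by
  set σ := Real.sqrt (1 - ρ ^ 2) with hσdef
  have hσ : 0 < σ := sigma_pos hρ
  have hb : 0 < (2 * σ ^ 2)⁻¹ := by positivity
  have h := ((integrable_mul_gauss hb (ρ * z)).const_mul
    ((2 * Real.pi * σ)⁻¹ * Real.exp (-z ^ 2 / 2)))
  refine h.congr (Filter.Eventually.of_forall fun w => ?_)
  show (2 * Real.pi * σ)⁻¹ * Real.exp (-z ^ 2 / 2) *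
      (w * Real.exp (-(2 * σ ^ 2)⁻¹ * (w - ρ * z) ^ 2)) = w * binormPdf ρ z w
  rw [binormPdf_eq hρ, ← hσdef,
    show -(2 * σ ^ 2)⁻¹ * (w - ρ * z) ^ 2 = -(w - ρ * z) ^ 2 / (2 * σ ^ 2) by ring]
  ring

lemma inner_eq (z : ℝ) :
    ∫ w in Set.Iio (0:ℝ), w * binormPdf ρ z w =
      -(Real.sqrt (1 - ρ ^ 2) / (2 * Real.pi)) *
          Real.exp (-z ^ 2 / (2 * (Real.sqrt (1 - ρ ^ 2)) ^ 2)) +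
        ρ * z * stdPdf z * stdCdf (-ρ * z / Real.sqrt (1 - ρ ^ 2)) := by
  set σ := Real.sqrt (1 - ρ ^ 2) with hσdef
  have hσ : 0 < σ := sigma_pos hρ
  have hσ2 : σ ^ 2 = 1 - ρ ^ 2 := sigma_sq hρ
  have h2π : (0:ℝ) < Real.sqrt (2 * Real.pi) := Real.sqrt_pos.2 (by positivity)
  have h2πsq : Real.sqrt (2 * Real.pi) ^ 2 = 2 * Real.pi := Real.sq_sqrt (by positivity)
  set K : ℝ := (2 * Real.pi * σ)⁻¹ * Real.exp (-z ^ 2 / 2) with hK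
  set F : ℝ → ℝ := fun w => K * (-σ ^ 2 * Real.exp (-(w - ρ * z) ^ 2 / (2 * σ ^ 2)) +
      ρ * z * σ * Real.sqrt (2 * Real.pi) * stdCdf ((w - ρ * z) / σ)) with hF
  have hderiv : ∀ w : ℝ, HasDerivAt F (w * binormPdf ρ z w) w := by
    intro w
    have d1 : HasDerivAt (fun w : ℝ => -(w - ρ * z) ^ 2 / (2 * σ ^ 2))
        (-(2 * (w - ρ * z)) / (2 * σ ^ 2)) w := by
      have : HasDerivAt (fun w : ℝ => w - ρ * z) 1 w := (hasDerivAt_id w).sub_const _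
      simpa using ((this.pow 2).neg.div_const (2 * σ ^ 2))
    have d2 : HasDerivAt (fun w : ℝ => Real.exp (-(w - ρ * z) ^ 2 / (2 * σ ^ 2)))
        (Real.exp (-(w - ρ * z) ^ 2 / (2 * σ ^ 2)) * (-(2 * (w - ρ * z)) / (2 * σ ^ 2))) w :=
      d1.exp
    have d3 : HasDerivAt (fun w : ℝ => (w - ρ * z) / σ) (1 / σ) w := by
      simpa using ((hasDerivAt_id w).sub_const (ρ * z)).div_const σ
    have d4 : HasDerivAt (fun w : ℝ => stdCdf ((w - ρ * z) / σ))
        (stdPdf ((w - ρ * z) / σ) * (1 / σ)) w :=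
      (hasDerivAt_stdCdf _).comp w d3
    have d5 := ((d2.const_mul (-σ ^ 2)).add
      ((d4.const_mul (ρ * z * σ * Real.sqrt (2 * Real.pi))))).const_mul K
    refine d5.congr_deriv (Eq.symm ?_)
    rw [binormPdf_eq hρ, ← hσdef, ← hK]
    unfold stdPdf
    have hE : -((w - ρ * z) / σ) ^ 2 / 2 = -(w - ρ * z) ^ 2 / (2 * σ ^ 2) := by
      field_simp
    rw [hE]
    field_simp
    ring
  have l0 : Tendsto (fun w : ℝ => w - ρ * z) atBot atBot := by
    simpa [sub_eq_add_neg] using tendsto_atBot_add_const_right atBot (-(ρ * z))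
      (tendsto_id (α := ℝ))
  have lsq : Tendsto (fun w : ℝ => (w - ρ * z) ^ 2) atBot atTop := by
    have := l0.atBot_mul_atBot₀ l0
    refine this.congr fun w => by ring
  have l1 : Tendsto (fun w : ℝ => -(w - ρ * z) ^ 2 / (2 * σ ^ 2)) atBot atBot :=
    Tendsto.atBot_div_const (by positivity) (tendsto_neg_atTop_atBot.comp lsq)
  have e1 : Tendsto (fun w : ℝ => Real.exp (-(w - ρ * z) ^ 2 / (2 * σ ^ 2))) atBot (nhds 0) :=
    Real.tendsto_exp_atBot.comp l1
  have c1 : Tendsto (fun w : ℝ => stdCdf ((w - ρ * z) / σ)) atBot (nhds 0) :=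
    tendsto_stdCdf_atBot.comp (Tendsto.atBot_div_const hσ l0)
  have hlim : Tendsto F atBot (nhds 0) := by
    have h := ((e1.const_mul (-σ ^ 2)).add
      (c1.const_mul (ρ * z * σ * Real.sqrt (2 * Real.pi)))).const_mul K
    rw [show K * (-σ ^ 2 * 0 + ρ * z * σ * Real.sqrt (2 * Real.pi) * 0) = 0 from by ring] at h
    exact h
  have key := MeasureTheory.integral_Iic_of_hasDerivAt_of_tendsto' (a := (0:ℝ))
    (fun w _ => hderiv w) ((inner_integrable hρ z).integrableOn) hlim
  rw [← MeasureTheory.integral_Iic_eq_integral_Iio, key, sub_zero, hF]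
  have harg : (0 - ρ * z) / σ = -ρ * z / σ := by ring
  simp only [harg]
  have hexp2 : Real.exp (-z ^ 2 / 2) * Real.exp (-(0 - ρ * z) ^ 2 / (2 * σ ^ 2)) =
      Real.exp (-z ^ 2 / (2 * σ ^ 2)) := by
    rw [← Real.exp_add]
    congr 1
    field_simp
    linear_combination (-z ^ 2) * hσ2
  have t1 : -σ ^ 2 * (Real.exp (-(0 - ρ * z) ^ 2 / (2 * σ ^ 2)) * K) =
      -(σ / (2 * Real.pi)) * Real.exp (-z ^ 2 / (2 * σ ^ 2)) := by
    rw [hK, ← hexp2]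
    have hπ : (0:ℝ) < Real.pi := Real.pi_pos
    field_simp
  have t2 : K * (ρ * z * σ * Real.sqrt (2 * Real.pi) * stdCdf (-ρ * z / σ)) =
      ρ * z * stdPdf z * stdCdf (-ρ * z / σ) := by
    rw [hK]
    unfold stdPdf
    rw [← h2πsq]
    have hπ : (0:ℝ) < Real.pi := Real.pi_pos
    field_simp
    rw [Real.sq_sqrt (sq_nonneg (√(2 * π)))]
    ring
  rw [mul_add, mul_comm K, mul_assoc (-σ ^ 2 : ℝ), t1, t2]
end

lemma hasDerivAt_stdPdf (x : ℝ) : HasDerivAt stdPdf (-x * stdPdf x) x := by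
  have d1 : HasDerivAt (fun x : ℝ => -x ^ 2 / 2) (-(2 * x ^ 1) / 2) x := by
    simpa using ((hasDerivAt_pow 2 x).neg.div_const 2)
  have d2 := (d1.exp).const_mul (Real.sqrt (2 * Real.pi))⁻¹
  have h : HasDerivAt stdPdf ((Real.sqrt (2 * Real.pi))⁻¹ *
      (Real.exp (-x ^ 2 / 2) * (-(2 * x ^ 1) / 2))) x := d2
  convert h using 1
  unfold stdPdf
  ring

lemma tendsto_stdPdf_atTop : Tendsto stdPdf atTop (nhds 0) := by
  have lsq : Tendsto (fun x : ℝ => x * x) atTop atTop :=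
    (tendsto_id (α := ℝ)).atTop_mul_atTop₀ (tendsto_id (α := ℝ))
  have l1 : Tendsto (fun x : ℝ => -x ^ 2 / 2) atTop atBot := by
    apply Tendsto.atBot_div_const (by norm_num : (0:ℝ) < 2)
    have h := tendsto_neg_atTop_atBot.comp lsq
    exact h.congr fun x => by simp only [Function.comp_apply]; ring
  have h := (Real.tendsto_exp_atBot.comp l1).const_mul (Real.sqrt (2 * Real.pi))⁻¹
  rw [mul_zero] at h
  exact h.congr fun x => rfl

section
variable {ρ : ℝ} (hρ : ρ ∈ Set.Ioo (-1 : ℝ) 1)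
include hρ

lemma outer_deriv (z : ℝ) :
    HasDerivAt (fun z : ℝ => -(Real.sqrt (2 * Real.pi))⁻¹ * stdCdf (z / Real.sqrt (1 - ρ ^ 2)) -
        ρ * (stdPdf z * stdCdf (-ρ * z / Real.sqrt (1 - ρ ^ 2))))
      (-(Real.sqrt (1 - ρ ^ 2) / (2 * Real.pi)) *
          Real.exp (-z ^ 2 / (2 * (Real.sqrt (1 - ρ ^ 2)) ^ 2)) +
        ρ * z * stdPdf z * stdCdf (-ρ * z / Real.sqrt (1 - ρ ^ 2))) z := by
  set σ := Real.sqrt (1 - ρ ^ 2) with hσdef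
  have hσ : 0 < σ := sigma_pos hρ
  have hσ2 : σ ^ 2 = 1 - ρ ^ 2 := sigma_sq hρ
  have h2π : (0:ℝ) < Real.sqrt (2 * Real.pi) := Real.sqrt_pos.2 (by positivity)
  have h2πsq : Real.sqrt (2 * Real.pi) ^ 2 = 2 * Real.pi := Real.sq_sqrt (by positivity)
  have hπ : (0:ℝ) < Real.pi := Real.pi_pos
  have d1 : HasDerivAt (fun z : ℝ => stdCdf (z / σ)) (stdPdf (z / σ) * (1 / σ)) z :=
    (hasDerivAt_stdCdf _).comp z ((hasDerivAt_id z).div_const σ)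
  have d2 : HasDerivAt (fun z : ℝ => -ρ * z / σ) (-ρ / σ) z := by
    simpa using ((hasDerivAt_id z).const_mul (-ρ)).div_const σ
  have d3 : HasDerivAt (fun z : ℝ => stdCdf (-ρ * z / σ)) (stdPdf (-ρ * z / σ) * (-ρ / σ)) z :=
    (hasDerivAt_stdCdf _).comp z d2
  have d4 : HasDerivAt (fun z : ℝ => stdPdf z * stdCdf (-ρ * z / σ))
      (-z * stdPdf z * stdCdf (-ρ * z / σ) + stdPdf z * (stdPdf (-ρ * z / σ) * (-ρ / σ))) z :=
    (hasDerivAt_stdPdf z).mul d3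
  have d5 := ((d1.const_mul (-(Real.sqrt (2 * Real.pi))⁻¹)).sub (d4.const_mul ρ))
  refine d5.congr_deriv (Eq.symm ?_)
  have hA : stdPdf (z / σ) = (Real.sqrt (2 * Real.pi))⁻¹ * Real.exp (-z ^ 2 / (2 * σ ^ 2)) := by
    unfold stdPdf
    congr 2
    field_simp
  have hB : stdPdf z * stdPdf (-ρ * z / σ) =
      (Real.sqrt (2 * Real.pi))⁻¹ * (Real.sqrt (2 * Real.pi))⁻¹ *
        Real.exp (-z ^ 2 / (2 * σ ^ 2)) := by
    unfold stdPdf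
    rw [show (Real.sqrt (2 * Real.pi))⁻¹ * Real.exp (-z ^ 2 / 2) *
        ((Real.sqrt (2 * Real.pi))⁻¹ * Real.exp (-(-ρ * z / σ) ^ 2 / 2)) =
        (Real.sqrt (2 * Real.pi))⁻¹ * (Real.sqrt (2 * Real.pi))⁻¹ *
        (Real.exp (-z ^ 2 / 2) * Real.exp (-(-ρ * z / σ) ^ 2 / 2)) from by ring]
    congr 1
    rw [← Real.exp_add]
    congr 1
    field_simp
    linear_combination (-z ^ 2) * hσ2
  rw [show -(Real.sqrt (2 * Real.pi))⁻¹ * (stdPdf (z / σ) * (1 / σ)) -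
      ρ * (-z * stdPdf z * stdCdf (-ρ * z / σ) + stdPdf z * (stdPdf (-ρ * z / σ) * (-ρ / σ))) =
      -(Real.sqrt (2 * Real.pi))⁻¹ * (stdPdf (z / σ) * (1 / σ)) +
      ρ * z * stdPdf z * stdCdf (-ρ * z / σ) +
      (ρ * ρ / σ) * (stdPdf z * stdPdf (-ρ * z / σ)) from by ring]
  rw [hA, hB, ← h2πsq]
  set s := Real.sqrt (2 * Real.pi) with hs
  set E := Real.exp (-z ^ 2 / (2 * σ ^ 2)) with hE
  field_simp
  rw [Real.sq_sqrt (sq_nonneg s)]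
  linear_combination (-(E * s ^ 2)) * hσ2

lemma outer_tendsto :
    Tendsto (fun z : ℝ => -(Real.sqrt (2 * Real.pi))⁻¹ * stdCdf (z / Real.sqrt (1 - ρ ^ 2)) -
        ρ * (stdPdf z * stdCdf (-ρ * z / Real.sqrt (1 - ρ ^ 2))))
      atTop (nhds (-(Real.sqrt (2 * Real.pi))⁻¹)) := by
  set σ := Real.sqrt (1 - ρ ^ 2) with hσdef
  have hσ : 0 < σ := sigma_pos hρ
  have l1 : Tendsto (fun z : ℝ => stdCdf (z / σ)) atTop (nhds 1) :=
    tendsto_stdCdf_atTop.comp (Tendsto.atTop_div_const hσ tendsto_id)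
  have l2 : Tendsto (fun z : ℝ => ρ * (stdPdf z * stdCdf (-ρ * z / σ))) atTop (nhds 0) := by
    have hg : Tendsto (fun z : ℝ => |ρ| * stdPdf z) atTop (nhds 0) := by
      have := tendsto_stdPdf_atTop.const_mul |ρ|
      simpa using this
    refine squeeze_zero_norm (fun z => ?_) hg
    have h1 : |stdCdf (-ρ * z / σ)| ≤ 1 :=
      abs_le.2 ⟨by linarith [stdCdf_nonneg (-ρ * z / σ)], stdCdf_le_one _⟩
    have h2 : 0 ≤ stdPdf z := stdPdf_nonneg z
    rw [Real.norm_eq_abs, abs_mul, abs_mul, abs_of_nonneg h2]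
    calc |ρ| * (stdPdf z * |stdCdf (-ρ * z / σ)|) ≤ |ρ| * (stdPdf z * 1) := by
          apply mul_le_mul_of_nonneg_left _ (abs_nonneg ρ)
          exact mul_le_mul_of_nonneg_left h1 h2
      _ = |ρ| * stdPdf z := by ring
  have h := (l1.const_mul (-(Real.sqrt (2 * Real.pi))⁻¹)).sub l2
  simpa using h

lemma outer_integrable (u : ℝ) :
    IntegrableOn (fun z : ℝ =>
      -(Real.sqrt (1 - ρ ^ 2) / (2 * Real.pi)) *
          Real.exp (-z ^ 2 / (2 * (Real.sqrt (1 - ρ ^ 2)) ^ 2)) +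
        ρ * z * stdPdf z * stdCdf (-ρ * z / Real.sqrt (1 - ρ ^ 2))) (Set.Ioi u) := by
  set σ := Real.sqrt (1 - ρ ^ 2) with hσdef
  have hσ : 0 < σ := sigma_pos hρ
  have h2π : (0:ℝ) < Real.sqrt (2 * Real.pi) := Real.sqrt_pos.2 (by positivity)
  have hb : (0:ℝ) < (2 * σ ^ 2)⁻¹ := by positivity
  have part1 : Integrable (fun z : ℝ =>
      -(σ / (2 * Real.pi)) * Real.exp (-z ^ 2 / (2 * σ ^ 2))) := by
    have h := (integrable_exp_neg_mul_sq hb).const_mul (-(σ / (2 * Real.pi)))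
    refine h.congr (Filter.Eventually.of_forall fun z => ?_)
    show -(σ / (2 * Real.pi)) * Real.exp (-(2 * σ ^ 2)⁻¹ * z ^ 2) =
        -(σ / (2 * Real.pi)) * Real.exp (-z ^ 2 / (2 * σ ^ 2))
    rw [show -(2 * σ ^ 2)⁻¹ * z ^ 2 = -z ^ 2 / (2 * σ ^ 2) from by ring]
  have part2 : Integrable (fun z : ℝ => ρ * z * stdPdf z * stdCdf (-ρ * z / σ)) := by
    have hg : Integrable (fun z : ℝ =>
        |ρ| * (Real.sqrt (2 * Real.pi))⁻¹ * |z * Real.exp (-(1/2 : ℝ) * z ^ 2)|) :=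
      ((integrable_mul_exp_neg_mul_sq (by norm_num : (0:ℝ) < 1/2)).abs.const_mul _)
    refine Integrable.mono' hg ?_ (Filter.Eventually.of_forall fun z => ?_)
    · apply Continuous.aestronglyMeasurable
      exact ((continuous_const.mul continuous_id).mul continuous_stdPdf).mul
        (continuous_stdCdf.comp ((continuous_const.mul continuous_id).div_const σ))
    · have h1 : |stdCdf (-ρ * z / σ)| ≤ 1 :=
        abs_le.2 ⟨by linarith [stdCdf_nonneg (-ρ * z / σ)], stdCdf_le_one _⟩
      have h2 : 0 ≤ stdPdf z := stdPdf_nonneg z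
      rw [Real.norm_eq_abs]
      have heq : |ρ * z * stdPdf z * stdCdf (-ρ * z / σ)| =
          |ρ| * |z| * stdPdf z * |stdCdf (-ρ * z / σ)| := by
        rw [abs_mul, abs_mul, abs_mul, abs_of_nonneg h2]
      rw [heq]
      have hstd : stdPdf z = (Real.sqrt (2 * Real.pi))⁻¹ * Real.exp (-(1/2 : ℝ) * z ^ 2) := by
        unfold stdPdf; ring_nf
      have habs : |z * Real.exp (-(1/2 : ℝ) * z ^ 2)| = |z| * Real.exp (-(1/2 : ℝ) * z ^ 2) := by
        rw [abs_mul, abs_of_pos (Real.exp_pos _)]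
      rw [habs, hstd]
      have hz : (0:ℝ) ≤ |ρ| * |z| * ((Real.sqrt (2 * Real.pi))⁻¹ *
          Real.exp (-(1/2 : ℝ) * z ^ 2)) := by positivity
      calc |ρ| * |z| * ((Real.sqrt (2 * Real.pi))⁻¹ * Real.exp (-(1/2 : ℝ) * z ^ 2)) *
            |stdCdf (-ρ * z / σ)|
          ≤ |ρ| * |z| * ((Real.sqrt (2 * Real.pi))⁻¹ * Real.exp (-(1/2 : ℝ) * z ^ 2)) * 1 :=
            mul_le_mul_of_nonneg_left h1 hz
        _ = |ρ| * (Real.sqrt (2 * Real.pi))⁻¹ * (|z| * Real.exp (-(1/2 : ℝ) * z ^ 2)) := by ring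
  exact ((part1.add part2).congr (Filter.Eventually.of_forall fun z => by simp only [Pi.add_apply])).integrableOn

end


theorem stmt_0 (ρ : ℝ) (hρ : ρ ∈ Set.Ioo (-1 : ℝ) 1) (u : ℝ) :
    ∫ z in Set.Ioi u, ∫ w in Set.Iio (0 : ℝ), w * binormPdf ρ z w =
      -(Real.sqrt (2 * Real.pi))⁻¹ *
        (stdTail (u / Real.sqrt (1 - ρ ^ 2)) -
          Real.sqrt (2 * Real.pi) * ρ * stdPdf u *
            stdCdf (-ρ * u / Real.sqrt (1 - ρ ^ 2))) := by
  set σ := Real.sqrt (1 - ρ ^ 2) with hσdef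
  have h2π : (0:ℝ) < Real.sqrt (2 * Real.pi) := Real.sqrt_pos.2 (by positivity)
  have step1 : ∫ z in Set.Ioi u, ∫ w in Set.Iio (0 : ℝ), w * binormPdf ρ z w =
      ∫ z in Set.Ioi u, (-(σ / (2 * Real.pi)) * Real.exp (-z ^ 2 / (2 * σ ^ 2)) +
        ρ * z * stdPdf z * stdCdf (-ρ * z / σ)) :=
    MeasureTheory.setIntegral_congr_fun measurableSet_Ioi (fun z _ => inner_eq hρ z)
  rw [step1]
  have key := MeasureTheory.integral_Ioi_of_hasDerivAt_of_tendsto' (a := u)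
    (fun z _ => outer_deriv hρ z) (outer_integrable hρ u) (outer_tendsto hρ)
  rw [key]
  unfold stdTail
  field_simp
  ring
end

section
/- Let (Ω, 𝔽, P) be a probability space, let N ≥ 1, let H : Ω → (N×N real matrices) be measurable with H(ω) symmetric for all ω, let X : Ω → ℝ be measurable, let A be an invertible N×N real matrix, and let u ∈ ℝ. Assume |det H| is P-integrable and E[ |det H| · 1_{H ≺ 0} ] > 0, where H ≺ 0 means H is negative definite. Then E[ |det(AᵀHA)| · 1_{X > u} · 1_{AᵀHA ≺ 0} ] / E[ |det(AᵀHA)| · 1_{AᵀHA ≺ 0} ] = E[ |det H| · 1_{X > u} · 1_{H ≺ 0} ] / E[ |det H| · 1_{H ≺ 0} ]. (This ratio invariance under congruence by an invertible matrix shows that an anisotropic Gaussian field X(t) = Z(At), where Z is isotropic, has the same Kac–Rice peak height distribution as Z.) -/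
open MeasureTheory Matrix
open scoped Classical

/-- A real symmetric matrix is negative definite if its quadratic form is negative on all
nonzero vectors. -/
def IsNegDef {N : ℕ} (M : Matrix (Fin N) (Fin N) ℝ) : Prop :=
  ∀ v : Fin N → ℝ, v ≠ 0 → v ⬝ᵥ M.mulVec v < 0

lemma quad_congr {N : ℕ} (A M : Matrix (Fin N) (Fin N) ℝ) (v : Fin N → ℝ) :
    v ⬝ᵥ (Aᵀ * M * A).mulVec v = (A.mulVec v) ⬝ᵥ M.mulVec (A.mulVec v) := by
  rw [← Matrix.mulVec_mulVec, ← Matrix.mulVec_mulVec, Matrix.dotProduct_mulVec,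
    Matrix.vecMul_transpose]

lemma isNegDef_congr {N : ℕ} (A M : Matrix (Fin N) (Fin N) ℝ) (hA : IsUnit A.det) :
    IsNegDef (Aᵀ * M * A) ↔ IsNegDef M := by
  constructor
  · intro h w hw
    set v := A⁻¹.mulVec w with hv
    have hAv : A.mulVec v = w := by
      rw [hv, Matrix.mulVec_mulVec, Matrix.mul_nonsing_inv A hA, Matrix.one_mulVec]
    have hvne : v ≠ 0 := by
      intro h0
      apply hw
      rw [← hAv, h0, Matrix.mulVec_zero]
    have := h v hvne
    rwa [quad_congr, hAv] at this
  · intro h v hv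
    rw [quad_congr]
    apply h
    intro h0
    apply hv
    have := congrArg (A⁻¹.mulVec ·) h0
    simpa [Matrix.mulVec_mulVec, Matrix.nonsing_inv_mul A hA, Matrix.one_mulVec] using this

theorem stmt_13 {Ω : Type*} [MeasurableSpace Ω] (P : Measure Ω) [IsProbabilityMeasure P]
    (N : ℕ) (hN : 1 ≤ N) (H : Ω → Matrix (Fin N) (Fin N) ℝ) (hHmeas : ∀ i j, Measurable fun ω => H ω i j)
    (hHsymm : ∀ ω, (H ω).IsSymm) (X : Ω → ℝ) (hXmeas : Measurable X)
    (A : Matrix (Fin N) (Fin N) ℝ) (hA : IsUnit A.det) (u : ℝ)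
    (hint : Integrable (fun ω => |(H ω).det|) P)
    (hpos : 0 < ∫ ω, |(H ω).det| * (if IsNegDef (H ω) then (1 : ℝ) else 0) ∂P) :
    (∫ ω, |(Aᵀ * H ω * A).det| * (if X ω > u then (1 : ℝ) else 0) *
        (if IsNegDef (Aᵀ * H ω * A) then (1 : ℝ) else 0) ∂P) /
      (∫ ω, |(Aᵀ * H ω * A).det| *
        (if IsNegDef (Aᵀ * H ω * A) then (1 : ℝ) else 0) ∂P) =
    (∫ ω, |(H ω).det| * (if X ω > u then (1 : ℝ) else 0) *
        (if IsNegDef (H ω) then (1 : ℝ) else 0) ∂P) /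
      (∫ ω, |(H ω).det| * (if IsNegDef (H ω) then (1 : ℝ) else 0) ∂P) := by
  have hdet : ∀ ω, |(Aᵀ * H ω * A).det| = A.det ^ 2 * |(H ω).det| := by
    intro ω
    rw [Matrix.det_mul, Matrix.det_mul, Matrix.det_transpose]
    rw [abs_mul, abs_mul]
    have : |A.det| * |(H ω).det| * |A.det| = |A.det| ^ 2 * |(H ω).det| := by ring
    rw [this, sq_abs]
  have hND : ∀ ω, (if IsNegDef (Aᵀ * H ω * A) then (1 : ℝ) else 0)
      = (if IsNegDef (H ω) then (1 : ℝ) else 0) := by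
    intro ω
    simp [isNegDef_congr A (H ω) hA]
  have hc : (0 : ℝ) < A.det ^ 2 := by
    have : A.det ≠ 0 := IsUnit.ne_zero (by simpa using hA)
    positivity
  have e1 : (∫ ω, |(Aᵀ * H ω * A).det| * (if X ω > u then (1 : ℝ) else 0) *
        (if IsNegDef (Aᵀ * H ω * A) then (1 : ℝ) else 0) ∂P)
      = A.det ^ 2 * ∫ ω, |(H ω).det| * (if X ω > u then (1 : ℝ) else 0) *
        (if IsNegDef (H ω) then (1 : ℝ) else 0) ∂P := by
    rw [← integral_const_mul]
    congr 1
    funext ω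
    rw [hdet, hND]
    ring
  have e2 : (∫ ω, |(Aᵀ * H ω * A).det| *
        (if IsNegDef (Aᵀ * H ω * A) then (1 : ℝ) else 0) ∂P)
      = A.det ^ 2 * ∫ ω, |(H ω).det| * (if IsNegDef (H ω) then (1 : ℝ) else 0) ∂P := by
    rw [← integral_const_mul]
    congr 1
    funext ω
    rw [hdet, hND]
    ring
  rw [e1, e2, mul_div_mul_left _ _ (ne_of_gt hc)]
end
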